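/- For every positive integer n, the multiple zeta value ζ({2}^n) = ∑_{k_1 > k_2 > ⋯ > k_n ≥ 1} 1/(k_1² k_2² ⋯ k_n²) equals π^{2n}/(2n+1)!. -/

import Mathlib

open Finset Polynomial Real Filter Topology

namespace ZTP

noncomputable def tt (N k : ℕ) : ℝ :=
  (Real.cos (k * π / (2 * N + 1)) / Real.sin (k * π / (2 * N + 1))) ^ 2

lemma m_pos (N : ℕ) : (0:ℝ) < 2 * N + 1 := by positivity

lemma theta_pos {N k : ℕ} (hk : k ∈ Icc 1 N) : 0 < (k : ℝ) * π / (2 * N + 1) := by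
  have hk1 : 1 ≤ k := (mem_Icc.mp hk).1
  have : (0:ℝ) < k := by exact_mod_cast hk1
  positivity

lemma theta_lt {N k : ℕ} (hk : k ∈ Icc 1 N) : (k : ℝ) * π / (2 * N + 1) < π / 2 := by
  obtain ⟨hk1, hk2⟩ := mem_Icc.mp hk
  rw [div_lt_div_iff₀ (m_pos N) two_pos]
  have hπ := Real.pi_pos
  have : (k : ℝ) ≤ N := by exact_mod_cast hk2
  nlinarith

lemma sin_theta_pos {N k : ℕ} (hk : k ∈ Icc 1 N) : 0 < Real.sin ((k : ℝ) * π / (2 * N + 1)) :=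
  Real.sin_pos_of_pos_of_lt_pi (theta_pos hk)
    ((theta_lt hk).trans (by linarith [Real.pi_pos]))

lemma cos_theta_pos {N k : ℕ} (hk : k ∈ Icc 1 N) : 0 < Real.cos ((k : ℝ) * π / (2 * N + 1)) :=
  Real.cos_pos_of_mem_Ioo ⟨by linarith [theta_pos hk, Real.pi_pos], theta_lt hk⟩

lemma tt_nonneg (N k : ℕ) : 0 ≤ tt N k := sq_nonneg _

/-- De Moivre expansion of `sin ((2N+1)θ)`. -/

lemma demoivre (N : ℕ) (θ : ℝ) :
    Real.sin ((2 * N + 1) * θ) =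
    ∑ j ∈ range (N + 1), (-1 : ℝ) ^ j * ((2 * N + 1).choose (2 * j + 1)) *
      Real.cos θ ^ (2 * (N - j)) * Real.sin θ ^ (2 * j + 1) := by
  have key : ((Complex.cos θ + Complex.sin θ * Complex.I) ^ (2 * N + 1)).im
      = Real.sin ((2 * N + 1) * θ) := by
    rw [Complex.cos_add_sin_mul_I_pow]
    have : ((2 * N + 1 : ℕ) : ℂ) * (θ : ℂ) = ((((2*N+1 : ℕ)) * θ : ℝ) : ℂ) := by push_cast; ring
    rw [this, ← Complex.ofReal_sin, ← Complex.ofReal_cos]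
    simp only [Complex.add_im, Complex.ofReal_im, Complex.mul_im, Complex.ofReal_re,
      Complex.I_im, Complex.I_re, mul_zero, mul_one, zero_add, add_zero]
    push_cast
    ring_nf
  rw [← key, add_comm (Complex.cos (θ:ℂ)), add_pow, Complex.im_sum]
  have hsplit : range (2 * N + 1 + 1) =
      ((range (N+1)).image (fun j => 2*j+1)) ∪ ((range (N+1)).image (fun j => 2*j)) := by
    ext i
    simp only [mem_range, mem_union, mem_image]
    constructor
    · intro hi
      rcases Nat.even_or_odd i with ⟨j, hj⟩ | ⟨j, hj⟩
      · exact Or.inr ⟨j, by omega, by omega⟩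
      · exact Or.inl ⟨j, by omega, by omega⟩
    · rintro (⟨j, hj, rfl⟩ | ⟨j, hj, rfl⟩) <;> omega
  have hdisj : Disjoint ((range (N+1)).image (fun j => 2*j+1)) ((range (N+1)).image (fun j => 2*j)) := by
    rw [Finset.disjoint_left]
    intro a ha hb
    simp only [mem_image, mem_range] at ha hb
    obtain ⟨j, _, rfl⟩ := ha
    obtain ⟨l, _, hl⟩ := hb
    omega
  rw [hsplit, sum_union hdisj, sum_image (by intros a _ b _ h; simp only at h; omega),
    sum_image (by intros a _ b _ h; simp only at h; omega)]
  have heven : ∀ j ∈ range (N+1),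
      ((Complex.sin θ * Complex.I) ^ (2*j) * Complex.cos θ ^ (2 * N + 1 - 2*j) * ((2*N+1).choose (2*j) : ℂ)).im = 0 := by
    intro j _
    rw [← Complex.ofReal_sin, ← Complex.ofReal_cos]
    have h2 : Complex.I ^ (2*j) = ((-1:ℂ))^j := by rw [pow_mul, Complex.I_sq]
    have key2 : ((Real.sin θ : ℂ) * Complex.I) ^ (2*j) * (Real.cos θ : ℂ) ^ (2 * N + 1 - 2*j) * ((2*N+1).choose (2*j) : ℂ)
        = ((Real.sin θ ^ (2*j) * (-1:ℝ)^j * Real.cos θ ^ (2*N+1-2*j) * ((2*N+1).choose (2*j) : ℝ) : ℝ) : ℂ) := by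
      rw [mul_pow, h2]; push_cast; ring
    rw [key2, Complex.ofReal_im]
  have hodd : ∀ j ∈ range (N+1),
      ((Complex.sin θ * Complex.I) ^ (2*j+1) * Complex.cos θ ^ (2 * N + 1 - (2*j+1)) * ((2*N+1).choose (2*j+1) : ℂ)).im
      = (-1 : ℝ) ^ j * ((2 * N + 1).choose (2 * j + 1)) * Real.cos θ ^ (2 * (N - j)) * Real.sin θ ^ (2 * j + 1) := by
    intro j hj
    rw [← Complex.ofReal_sin, ← Complex.ofReal_cos]
    have he : 2 * N + 1 - (2*j+1) = 2 * (N - j) := by omega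
    rw [he]
    have h2 : Complex.I ^ (2*j) = ((-1:ℂ))^j := by rw [pow_mul, Complex.I_sq]
    have h3 : Complex.I ^ (2*j+1) = ((-1:ℂ))^j * Complex.I := by rw [pow_succ, h2]
    have key3 : ((Real.sin θ : ℂ) * Complex.I) ^ (2*j+1) * ((Real.cos θ : ℂ)) ^ (2*(N-j)) * ((2*N+1).choose (2*j+1) : ℂ)
        = ((Real.sin θ ^ (2*j+1) * (-1:ℝ)^j * Real.cos θ ^ (2*(N-j)) * ((2*N+1).choose (2*j+1) : ℝ) : ℝ) : ℂ) * Complex.I := by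
      rw [mul_pow, h3]; push_cast; ring
    rw [key3, Complex.mul_I_im, Complex.ofReal_re]
    ring
  rw [Finset.sum_congr rfl heven, Finset.sum_congr rfl hodd]
  simp

noncomputable def qpoly (N : ℕ) : Polynomial ℝ :=
  ∑ j ∈ range (N + 1), C ((-1 : ℝ) ^ j * ((2 * N + 1).choose (2 * j + 1))) * X ^ (N - j)

lemma qpoly_coeff {N j : ℕ} (hj : j ≤ N) :
    (qpoly N).coeff (N - j) = (-1 : ℝ) ^ j * ((2 * N + 1).choose (2 * j + 1)) := by
  rw [qpoly, finset_sum_coeff]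
  rw [Finset.sum_eq_single j]
  · rw [coeff_C_mul_X_pow, if_pos rfl]
  · intro i hi hij
    rw [mem_range] at hi
    rw [coeff_C_mul_X_pow, if_neg (by omega)]
  · intro h
    exact absurd (mem_range.mpr (by omega)) h

lemma qpoly_eval_eq (N : ℕ) (x : ℝ) :
    (qpoly N).eval x = ∑ j ∈ range (N + 1), (-1 : ℝ) ^ j * ((2 * N + 1).choose (2 * j + 1)) * x ^ (N - j) := by
  rw [qpoly, eval_finset_sum]
  simp

lemma qpoly_eval_tt {N k : ℕ} (hk : k ∈ Icc 1 N) : (qpoly N).eval (tt N k) = 0 := by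
  set θ := (k : ℝ) * π / (2 * N + 1) with hθ
  have hs : 0 < Real.sin θ := sin_theta_pos hk
  have hsm : Real.sin θ ^ (2 * N + 1) ≠ 0 := pow_ne_zero _ (ne_of_gt hs)
  have hmain : (qpoly N).eval (tt N k) * Real.sin θ ^ (2 * N + 1) = Real.sin ((2 * N + 1) * θ) := by
    rw [qpoly_eval_eq, demoivre, Finset.sum_mul]
    refine Finset.sum_congr rfl fun j hj => ?_
    rw [mem_range] at hj
    have hsplit : Real.sin θ ^ (2 * N + 1) = Real.sin θ ^ (2 * (N - j)) * Real.sin θ ^ (2 * j + 1) := by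
      rw [← pow_add]; congr 1; omega
    rw [tt, ← hθ, hsplit]
    have hs' : Real.sin θ ≠ 0 := ne_of_gt hs
    field_simp
    rw [div_pow, ← pow_mul, ← pow_mul, mul_assoc, div_mul_cancel₀ _ (pow_ne_zero _ hs')]
  have hz : Real.sin ((2 * N + 1) * θ) = 0 := by
    have : ((2 * N + 1) : ℝ) * θ = k * π := by
      rw [hθ]; field_simp
    rw [this]
    exact_mod_cast Real.sin_nat_mul_pi k
  rcases mul_eq_zero.mp (hmain.trans hz) with h | h
  · exact h
  · exact absurd h hsm

lemma tt_lt {N k l : ℕ} (hk : k ∈ Icc 1 N) (hl : l ∈ Icc 1 N) (hkl : k < l) :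
    tt N l < tt N k := by
  have hπ := Real.pi_pos
  set a := (k : ℝ) * π / (2 * N + 1) with ha
  set b := (l : ℝ) * π / (2 * N + 1) with hb
  have hab : a < b := by
    have hkl' : (k:ℝ) < l := by exact_mod_cast hkl
    rw [ha, hb]
    gcongr
  have hsa := sin_theta_pos hk
  have hsb := sin_theta_pos hl
  have hca := cos_theta_pos hk
  have hcb := cos_theta_pos hl
  have hcos : Real.cos b < Real.cos a :=
    Real.cos_lt_cos_of_nonneg_of_le_pi (le_of_lt (theta_pos hk))
      (by linarith [theta_lt hl]) hab
  have hsin : Real.sin a < Real.sin b :=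
    Real.sin_lt_sin_of_lt_of_le_pi_div_two (by linarith [theta_pos hk])
      (le_of_lt (theta_lt hl)) hab
  have hdiv : Real.cos b / Real.sin b < Real.cos a / Real.sin a := by
    rw [div_lt_div_iff₀ hsb hsa]
    nlinarith
  rw [tt, tt, ← ha, ← hb]
  have h0 : 0 ≤ Real.cos b / Real.sin b := le_of_lt (div_pos hcb hsb)
  exact pow_lt_pow_left₀ hdiv h0 two_ne_zero

lemma tt_injOn (N : ℕ) : ∀ k ∈ Icc 1 N, ∀ l ∈ Icc 1 N, tt N k = tt N l → k = l := by
  intro k hk l hl h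
  rcases lt_trichotomy k l with hlt | heq | hgt
  · exact absurd h (ne_of_gt (tt_lt hk hl hlt))
  · exact heq
  · exact absurd h (ne_of_lt (tt_lt hl hk hgt))

lemma qpoly_eq (N : ℕ) :
    qpoly N = C ((2 * N + 1 : ℕ) : ℝ) * ∏ k ∈ Icc 1 N, (X - C (tt N k)) := by
  set P : Polynomial ℝ := ∏ k ∈ Icc 1 N, (X - C (tt N k)) with hP
  have hPmonic : P.Monic := monic_prod_of_monic _ _ fun k _ => monic_X_sub_C _
  have hcard : (Icc 1 N).card = N := by rw [Nat.card_Icc]; omega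
  have hPdeg : P.natDegree = N := by
    rw [hP, natDegree_prod_of_monic _ _ fun k _ => monic_X_sub_C _]
    simp [natDegree_X_sub_C, hcard]
  have hqdeg : (qpoly N).natDegree ≤ N := by
    apply natDegree_sum_le_of_forall_le
    intro j hj
    exact le_trans (natDegree_C_mul_X_pow_le _ _) (Nat.sub_le _ _)
  have hqN : (qpoly N).coeff N = ((2 * N + 1 : ℕ) : ℝ) := by
    have := qpoly_coeff (N := N) (j := 0) (Nat.zero_le N)
    simpa using this
  set d : Polynomial ℝ := qpoly N - C ((2 * N + 1 : ℕ) : ℝ) * P with hd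
  have hdeval : ∀ x ∈ (Icc 1 N).image (tt N), d.eval x = 0 := by
    intro x hx
    obtain ⟨k, hk, rfl⟩ := mem_image.mp hx
    have hPz : P.eval (tt N k) = 0 := by
      rw [hP, eval_prod]
      apply Finset.prod_eq_zero hk
      simp
    simp [hd, qpoly_eval_tt hk, hPz]
  have hcards : ((Icc 1 N).image (tt N)).card = N := by
    rw [Finset.card_image_of_injOn fun k hk l hl h => tt_injOn N k hk l hl h, hcard]
  have hd0 : d = 0 := by
    by_cases h : d = 0
    · exact h
    apply Polynomial.eq_zero_of_natDegree_lt_card_of_eval_eq_zero' d ((Icc 1 N).image (tt N)) hdeval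
    rw [hcards]
    have hdN : d.natDegree ≤ N := by
      refine le_trans (natDegree_sub_le _ _) (max_le hqdeg ?_)
      exact le_trans (natDegree_C_mul_le _ _) (le_of_eq hPdeg)
    have hcoeffN : d.coeff N = 0 := by
      have hPN : P.coeff N = 1 := by
        have := hPmonic.coeff_natDegree
        rwa [hPdeg] at this
      rw [hd, coeff_sub, coeff_C_mul, hqN, hPN, mul_one, sub_self]
    rcases lt_or_eq_of_le hdN with hlt | heq
    · exact hlt
    · exfalso
      apply Polynomial.leadingCoeff_ne_zero.mpr h
      rw [Polynomial.leadingCoeff, heq, hcoeffN]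
  linear_combination (norm := ring_nf) hd0 - hd
  -- qpoly N = C m * P from d = 0

lemma esymm_tt {N j : ℕ} (hj : j ≤ N) :
    ∑ s ∈ powersetCard j (Icc 1 N), ∏ k ∈ s, tt N k
      = ((2 * N + 1).choose (2 * j + 1) : ℝ) / ((2 * N + 1 : ℕ) : ℝ) := by
  have hcard : (Icc 1 N).card = N := by rw [Nat.card_Icc]; omega
  have hm : ((2 * N + 1 : ℕ) : ℝ) ≠ 0 := by positivity
  have hcoeff := congrArg (fun p => Polynomial.coeff p (N - j)) (qpoly_eq N)
  rw [qpoly_coeff hj, coeff_C_mul] at hcoeff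
  have hprodeq : (∏ k ∈ Icc 1 N, (X - C (tt N k))).coeff (N - j)
      = ∑ w ∈ powersetCard j (Icc 1 N), ∏ k ∈ w, (- tt N k) := by
    have h1 : ∀ k ∈ Icc 1 N, (X - C (tt N k)) = (X + C (- tt N k)) := by
      intro k _; rw [map_neg]; ring
    rw [Finset.prod_congr rfl h1, Finset.prod_X_add_C_coeff _ _ (by rw [hcard]; omega : N - j ≤ (Icc 1 N).card)]
    have h3 : (Icc 1 N).card - (N - j) = j := by rw [hcard]; omega
    rw [h3]
  rw [hprodeq] at hcoeff
  have hneg : ∀ w ∈ powersetCard j (Icc 1 N), ∏ k ∈ w, (- tt N k) = (-1 : ℝ)^j * ∏ k ∈ w, tt N k := by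
    intro w hw
    have hwc : w.card = j := (mem_powersetCard.mp hw).2
    calc ∏ k ∈ w, (- tt N k) = ∏ k ∈ w, ((-1) * tt N k) := by simp [neg_one_mul]
    _ = (∏ _k ∈ w, (-1 : ℝ)) * ∏ k ∈ w, tt N k := prod_mul_distrib
    _ = (-1 : ℝ)^j * ∏ k ∈ w, tt N k := by rw [prod_const, hwc]
  rw [Finset.sum_congr rfl hneg, ← Finset.mul_sum] at hcoeff
  rw [eq_div_iff hm]
  have h1 : ((-1 : ℝ)^j) ≠ 0 := by
    apply pow_ne_zero; norm_num
  set S := ∑ s ∈ powersetCard j (Icc 1 N), ∏ k ∈ s, tt N k with hS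
  have h5 : ((2 * N + 1 : ℕ) : ℝ) * ((-1 : ℝ)^j * S) = (-1 : ℝ)^j * (((2 * N + 1 : ℕ) : ℝ) * S) := by
    ring
  have h4 := mul_left_cancel₀ h1 (hcoeff.trans h5)
  linarith

noncomputable def E (n N : ℕ) : ℝ :=
  ∑ s ∈ powersetCard n (Icc 1 N), ∏ k ∈ s, ((k : ℝ) ^ 2)⁻¹

lemma E_nonneg (n N : ℕ) : 0 ≤ E n N :=
  Finset.sum_nonneg fun s _ => Finset.prod_nonneg fun k _ => by positivity

lemma E_mono {n N M : ℕ} (h : N ≤ M) : E n N ≤ E n M := by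
  apply Finset.sum_le_sum_of_subset_of_nonneg
  · exact Finset.powersetCard_mono (Finset.Icc_subset_Icc_right h)
  · intro s _ _
    exact Finset.prod_nonneg fun k _ => by positivity

lemma sq_bound_lower {N k : ℕ} (hk : k ∈ Icc 1 N) :
    (π / (2 * N + 1)) ^ 2 * tt N k ≤ ((k : ℝ) ^ 2)⁻¹ := by
  set θ := (k : ℝ) * π / (2 * N + 1) with hθ
  have hs := sin_theta_pos hk
  have hc := cos_theta_pos hk
  have hθp := theta_pos hk
  have hπ := Real.pi_pos
  have hm : (0:ℝ) < 2 * N + 1 := by positivity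
  have hk1 : (1:ℝ) ≤ (k:ℝ) := by exact_mod_cast (mem_Icc.mp hk).1
  have hk0 : (0:ℝ) < k := by linarith
  have htan : θ < Real.tan θ := Real.lt_tan hθp (theta_lt hk)
  have htanpos : 0 < Real.tan θ := lt_trans hθp htan
  have hct : Real.cos θ / Real.sin θ < θ⁻¹ := by
    rw [Real.tan_eq_sin_div_cos] at htan
    have h5 : θ * Real.cos θ < Real.sin θ := (lt_div_iff₀ hc).mp htan
    rw [div_lt_iff₀ hs, inv_mul_eq_div, lt_div_iff₀ hθp]
    nlinarith
  have hkey : (π / (2 * N + 1)) * (Real.cos θ / Real.sin θ) ≤ (k : ℝ)⁻¹ := by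
    have h2 : (π / (2 * N + 1)) * θ⁻¹ = (k : ℝ)⁻¹ := by
      rw [hθ]; field_simp
    rw [← h2]
    have : 0 < π / (2 * N + 1) := by positivity
    nlinarith
  calc (π / (2 * N + 1)) ^ 2 * tt N k = ((π / (2 * N + 1)) * (Real.cos θ / Real.sin θ)) ^ 2 := by
        rw [tt, ← hθ, mul_pow]
  _ ≤ ((k : ℝ)⁻¹) ^ 2 := by
        apply pow_le_pow_left₀ (by positivity) hkey
  _ = ((k : ℝ) ^ 2)⁻¹ := by rw [inv_pow]

lemma sq_bound_upper {N k : ℕ} (hk : k ∈ Icc 1 N) :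
    ((k : ℝ) ^ 2)⁻¹ ≤ (π / (2 * N + 1)) ^ 2 * (1 + tt N k) := by
  set θ := (k : ℝ) * π / (2 * N + 1) with hθ
  have hs := sin_theta_pos hk
  have hθp := theta_pos hk
  have hπ := Real.pi_pos
  have hm : (0:ℝ) < 2 * N + 1 := by positivity
  have hk1 : (1:ℝ) ≤ (k:ℝ) := by exact_mod_cast (mem_Icc.mp hk).1
  have hk0 : (0:ℝ) < k := by linarith
  have hsinlt : Real.sin θ < θ := Real.sin_lt hθp
  have h2 : (π / (2 * N + 1)) * θ⁻¹ = (k : ℝ)⁻¹ := by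
    rw [hθ]; field_simp
  have hkey : (k : ℝ)⁻¹ ≤ (π / (2 * N + 1)) * (Real.sin θ)⁻¹ := by
    rw [← h2]
    have hp : 0 < π / (2 * N + 1) := by positivity
    have : θ⁻¹ ≤ (Real.sin θ)⁻¹ := by
      apply inv_anti₀ hs (le_of_lt hsinlt)
    nlinarith
  have hid : ((Real.sin θ) ^ 2)⁻¹ = 1 + tt N k := by
    rw [tt, ← hθ, div_pow]
    rw [one_add_div (pow_ne_zero 2 (ne_of_gt hs)), Real.sin_sq_add_cos_sq, one_div]
  calc ((k : ℝ) ^ 2)⁻¹ = ((k : ℝ)⁻¹) ^ 2 := by rw [inv_pow]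
  _ ≤ ((π / (2 * N + 1)) * (Real.sin θ)⁻¹) ^ 2 := by
        apply pow_le_pow_left₀ (by positivity) hkey
  _ = (π / (2 * N + 1)) ^ 2 * ((Real.sin θ) ^ 2)⁻¹ := by
        rw [mul_pow, inv_pow]
  _ = (π / (2 * N + 1)) ^ 2 * (1 + tt N k) := by rw [hid]

lemma LB_le_E {n N : ℕ} (h : n ≤ N) :
    (π / (2 * N + 1)) ^ (2 * n) * (((2 * N + 1).choose (2 * n + 1) : ℝ) / ((2 * N + 1 : ℕ) : ℝ))
      ≤ E n N := by
  rw [← esymm_tt h, Finset.mul_sum, E]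
  apply Finset.sum_le_sum
  intro s hs
  obtain ⟨hsub, hcard⟩ := mem_powersetCard.mp hs
  calc (π / (2 * N + 1)) ^ (2 * n) * ∏ k ∈ s, tt N k
      = ∏ k ∈ s, ((π / (2 * N + 1)) ^ 2 * tt N k) := by
        rw [Finset.prod_mul_distrib, Finset.prod_const, hcard, ← pow_mul]
  _ ≤ ∏ k ∈ s, ((k : ℝ) ^ 2)⁻¹ := by
        apply Finset.prod_le_prod
        · intro k _; exact mul_nonneg (by positivity) (tt_nonneg N k)
        · intro k hk; exact sq_bound_lower (hsub hk)

lemma sum_prod_one_add {u : Finset ℕ} {t : ℕ → ℝ} (ht : ∀ k ∈ u, 0 ≤ t k) (n : ℕ) :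
    ∑ s ∈ powersetCard n u, ∏ k ∈ s, (1 + t k)
      ≤ ∑ j ∈ range (n + 1), (u.card : ℝ) ^ (n - j) * ∑ w ∈ powersetCard j u, ∏ k ∈ w, t k := by
  classical
  have hexp : ∀ s ∈ powersetCard n u, ∏ k ∈ s, (1 + t k)
      = ∑ j ∈ range (n + 1), ∑ w ∈ powersetCard j s, ∏ k ∈ w, t k := by
    intro s hs
    obtain ⟨hsub, hcard⟩ := mem_powersetCard.mp hs
    have h1 : ∀ k ∈ s, (1 + t k) = (t k + 1) := fun k _ => by ring
    rw [Finset.prod_congr rfl h1, Finset.prod_add]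
    have h2 : ∀ w ∈ s.powerset, (∏ k ∈ w, t k) * ∏ _k ∈ s \ w, (1:ℝ) = ∏ k ∈ w, t k := by
      intro w _; rw [Finset.prod_const_one, mul_one]
    rw [Finset.sum_congr rfl h2, ← hcard]
    rw [Finset.sum_powerset]
  rw [Finset.sum_congr rfl hexp, Finset.sum_comm]
  apply Finset.sum_le_sum
  intro j hj
  rw [mem_range] at hj
  set P : Finset ℕ → ℝ := fun w => ∏ k ∈ w, t k with hPdef
  have hPnn : ∀ w ∈ powersetCard j u, 0 ≤ P w := by
    intro w hw
    exact Finset.prod_nonneg fun k hk => ht k ((mem_powersetCard.mp hw).1 hk)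
  have key : ∑ s ∈ powersetCard n u, ∑ w ∈ powersetCard j s, P w
      ≤ ∑ p ∈ (powersetCard j u) ×ˢ (powersetCard (n - j) u), P p.1 := by
    rw [Finset.sum_sigma']
    set A := (powersetCard n u).sigma (fun s => powersetCard j s) with hA
    set e : (_ : Finset ℕ) × Finset ℕ → Finset ℕ × Finset ℕ := fun x => (x.2, x.1 \ x.2) with he
    have hmem : ∀ x ∈ A, e x ∈ (powersetCard j u) ×ˢ (powersetCard (n - j) u) := by
      intro x hx
      rw [hA, Finset.mem_sigma] at hx
      obtain ⟨hx1, hx2⟩ := hx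
      obtain ⟨h1, h2⟩ := mem_powersetCard.mp hx1
      obtain ⟨h3, h4⟩ := mem_powersetCard.mp hx2
      rw [Finset.mem_product]
      constructor
      · exact mem_powersetCard.mpr ⟨h3.trans h1, h4⟩
      · apply mem_powersetCard.mpr
        constructor
        · exact (Finset.sdiff_subset).trans h1
        · rw [Finset.card_sdiff_of_subset h3, h2, h4]
    have hinj : ∀ x ∈ A, ∀ y ∈ A, e x = e y → x = y := by
      intro x hx y hy hxy
      rw [hA, Finset.mem_sigma] at hx hy
      obtain ⟨hx1, hx2⟩ := hx
      obtain ⟨hy1, hy2⟩ := hy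
      have h1 : x.2 = y.2 := congrArg Prod.fst hxy
      have h2 : x.1 \ x.2 = y.1 \ y.2 := congrArg Prod.snd hxy
      have h3 : x.1 = y.1 := by
        rw [← Finset.union_sdiff_of_subset (mem_powersetCard.mp hx2).1,
          ← Finset.union_sdiff_of_subset (mem_powersetCard.mp hy2).1, h2, h1]
      exact Sigma.ext h3 (heq_of_eq h1)
    calc ∑ x ∈ A, P x.2 = ∑ y ∈ A.image e, P y.1 := by
          rw [Finset.sum_image hinj]
    _ ≤ ∑ p ∈ (powersetCard j u) ×ˢ (powersetCard (n - j) u), P p.1 := by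
          apply Finset.sum_le_sum_of_subset_of_nonneg
          · intro y hy
            obtain ⟨x, hx, rfl⟩ := Finset.mem_image.mp hy
            exact hmem x hx
          · intro p hp _
            exact hPnn p.1 (Finset.mem_product.mp hp).1
  calc ∑ s ∈ powersetCard n u, ∑ w ∈ powersetCard j s, P w
      ≤ ∑ p ∈ (powersetCard j u) ×ˢ (powersetCard (n - j) u), P p.1 := key
  _ = ((powersetCard (n - j) u).card : ℝ) * ∑ w ∈ powersetCard j u, P w := by
        rw [Finset.sum_product]
        simp only [Finset.sum_const, nsmul_eq_mul]
        rw [Finset.mul_sum]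
  _ ≤ (u.card : ℝ) ^ (n - j) * ∑ w ∈ powersetCard j u, P w := by
        apply mul_le_mul_of_nonneg_right ?_ (Finset.sum_nonneg hPnn)
        rw [Finset.card_powersetCard]
        exact_mod_cast Nat.choose_le_pow u.card (n - j)

noncomputable def UB (n N : ℕ) : ℝ :=
  ∑ j ∈ range (n + 1), (N : ℝ) ^ (n - j) *
    ((π / (2 * N + 1)) ^ (2 * n) * (((2 * N + 1).choose (2 * j + 1) : ℝ) / ((2 * N + 1 : ℕ) : ℝ)))

lemma E_le_UB {n N : ℕ} (h : n ≤ N) : E n N ≤ UB n N := by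
  have hcard : (Icc 1 N).card = N := by rw [Nat.card_Icc]; omega
  have step1 : E n N ≤ (π / (2 * N + 1)) ^ (2 * n) *
      ∑ s ∈ powersetCard n (Icc 1 N), ∏ k ∈ s, (1 + tt N k) := by
    rw [Finset.mul_sum, E]
    apply Finset.sum_le_sum
    intro s hs
    obtain ⟨hsub, hcards⟩ := mem_powersetCard.mp hs
    calc ∏ k ∈ s, ((k : ℝ) ^ 2)⁻¹ ≤ ∏ k ∈ s, ((π / (2 * N + 1)) ^ 2 * (1 + tt N k)) := by
          apply Finset.prod_le_prod
          · intro k _; positivity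
          · intro k hk; exact sq_bound_upper (hsub hk)
    _ = (π / (2 * N + 1)) ^ (2 * n) * ∏ k ∈ s, (1 + tt N k) := by
          rw [Finset.prod_mul_distrib, Finset.prod_const, hcards, ← pow_mul]
  have step2 : ∑ s ∈ powersetCard n (Icc 1 N), ∏ k ∈ s, (1 + tt N k)
      ≤ ∑ j ∈ range (n + 1), (N : ℝ) ^ (n - j) * (((2 * N + 1).choose (2 * j + 1) : ℝ) / ((2 * N + 1 : ℕ) : ℝ)) := by
    have := sum_prod_one_add (u := Icc 1 N) (t := tt N) (fun k _ => tt_nonneg N k) n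
    rw [hcard] at this
    refine this.trans (le_of_eq (Finset.sum_congr rfl fun j hj => ?_))
    rw [mem_range] at hj
    rw [esymm_tt (by omega)]
  apply step1.trans
  rw [UB]
  have hpow : (0:ℝ) ≤ (π / (2 * N + 1)) ^ (2 * n) := by positivity
  calc (π / (2 * N + 1)) ^ (2 * n) * ∑ s ∈ powersetCard n (Icc 1 N), ∏ k ∈ s, (1 + tt N k)
      ≤ (π / (2 * N + 1)) ^ (2 * n) * ∑ j ∈ range (n + 1), (N : ℝ) ^ (n - j) *
        (((2 * N + 1).choose (2 * j + 1) : ℝ) / ((2 * N + 1 : ℕ) : ℝ)) :=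
        mul_le_mul_of_nonneg_left step2 hpow
  _ = ∑ j ∈ range (n + 1), (N : ℝ) ^ (n - j) *
        ((π / (2 * N + 1)) ^ (2 * n) * (((2 * N + 1).choose (2 * j + 1) : ℝ) / ((2 * N + 1 : ℕ) : ℝ))) := by
        rw [Finset.mul_sum]
        exact Finset.sum_congr rfl fun j _ => by ring

lemma tendsto_m : Tendsto (fun N : ℕ => 2 * (N : ℝ) + 1) atTop atTop :=
  tendsto_atTop_add_const_right _ 1 (Tendsto.const_mul_atTop two_pos tendsto_natCast_atTop_atTop)

lemma tendsto_choose_ratio (r : ℕ) :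
    Tendsto (fun N : ℕ => (((2 * N + 1).choose r : ℝ)) / (2 * (N : ℝ) + 1) ^ r) atTop
      (𝓝 (1 / (r.factorial : ℝ))) := by
  have heq : ∀ N : ℕ, (((2 * N + 1).choose r : ℝ)) / (2 * (N : ℝ) + 1) ^ r
      = (1 / (r.factorial : ℝ)) * ∏ i ∈ range r, (((2 * N + 1 - i : ℕ) : ℝ) / (2 * (N : ℝ) + 1)) := by
    intro N
    have hm : (2 * (N : ℝ) + 1) ≠ 0 := by positivity
    have hfac : ((r.factorial : ℝ)) ≠ 0 := by exact_mod_cast r.factorial_ne_zero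
    have hd : ((2 * N + 1).descFactorial r : ℝ) = (r.factorial : ℝ) * ((2 * N + 1).choose r : ℝ) := by
      exact_mod_cast congrArg (Nat.cast (R := ℝ)) (Nat.descFactorial_eq_factorial_mul_choose (2 * N + 1) r)
    have hprod : ((2 * N + 1).descFactorial r : ℝ) = ∏ i ∈ range r, ((2 * N + 1 - i : ℕ) : ℝ) := by
      rw [Nat.descFactorial_eq_prod_range]
      push_cast
      rfl
    rw [Finset.prod_div_distrib, Finset.prod_const, ← hprod, hd]
    field_simp
    rw [Finset.card_range]
  rw [show (1 / (r.factorial : ℝ)) = (1 / (r.factorial : ℝ)) * ∏ _i ∈ range r, (1:ℝ) by simp]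
  refine Tendsto.congr (fun N => (heq N).symm) (Tendsto.const_mul _ ?_)
  apply tendsto_finset_prod
  intro i _
  have hz : Tendsto (fun N : ℕ => (i : ℝ) / (2 * (N : ℝ) + 1)) atTop (𝓝 0) := by
    rw [show (0:ℝ) = (i:ℝ) * 0 by ring]
    exact Tendsto.const_mul _ tendsto_m.inv_tendsto_atTop
  have h1 : Tendsto (fun N : ℕ => 1 - (i : ℝ) / (2 * (N : ℝ) + 1)) atTop (𝓝 1) := by
    have := tendsto_const_nhds (x := (1:ℝ)) (f := atTop (α := ℕ)) |>.sub hz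
    simpa using this
  apply h1.congr'
  filter_upwards [eventually_ge_atTop i] with N hN
  have hle : i ≤ 2 * N + 1 := by omega
  have hm : (2 * (N : ℝ) + 1) ≠ 0 := by positivity
  rw [Nat.cast_sub hle]
  push_cast
  field_simp

noncomputable def LB (n N : ℕ) : ℝ :=
  (π / (2 * N + 1)) ^ (2 * n) * (((2 * N + 1).choose (2 * n + 1) : ℝ) / ((2 * N + 1 : ℕ) : ℝ))

lemma tendsto_LB (n : ℕ) :
    Tendsto (fun N : ℕ => LB n N) atTop (𝓝 (π ^ (2 * n) / ((2 * n + 1).factorial : ℝ))) := by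
  have heq : ∀ N : ℕ, LB n N
      = π ^ (2 * n) * ((((2 * N + 1).choose (2 * n + 1) : ℝ)) / (2 * (N : ℝ) + 1) ^ (2 * n + 1)) := by
    intro N
    have hm : (2 * (N : ℝ) + 1) ≠ 0 := by positivity
    rw [LB, div_pow]
    push_cast
    rw [div_mul_div_comm, ← pow_succ, mul_div_assoc]
  have := (tendsto_choose_ratio (2 * n + 1)).const_mul (π ^ (2 * n))
  rw [mul_one_div] at this
  exact Tendsto.congr (fun N => (heq N).symm) this

lemma UB_term_bound {n j N : ℕ} (hj : j < n) (hN : 1 ≤ N) :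
    (N : ℝ) ^ (n - j) *
      ((π / (2 * N + 1)) ^ (2 * n) * (((2 * N + 1).choose (2 * j + 1) : ℝ) / ((2 * N + 1 : ℕ) : ℝ)))
      ≤ π ^ (2 * n) / (N : ℝ) := by
  have hN1 : (1:ℝ) ≤ (N:ℝ) := by exact_mod_cast hN
  have hNpos : (0:ℝ) < N := by linarith
  have hm : (0:ℝ) < 2 * (N:ℝ) + 1 := by positivity
  have hNm : (N:ℝ) ≤ 2 * (N:ℝ) + 1 := by linarith
  have hc : ((2 * N + 1).choose (2 * j + 1) : ℝ) ≤ (2 * (N:ℝ) + 1) ^ (2 * j + 1) := by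
    have := Nat.choose_le_pow (2 * N + 1) (2 * j + 1)
    have h2 : ((2 * N + 1).choose (2 * j + 1) : ℝ) ≤ (((2 * N + 1) ^ (2 * j + 1) : ℕ) : ℝ) := by
      exact_mod_cast this
    refine h2.trans (le_of_eq ?_)
    push_cast
    ring
  have h1 : (N:ℝ) ≤ (N:ℝ) ^ (n - j) := le_self_pow₀ hN1 (by omega)
  have h2 : (N:ℝ) ^ (n - j) ≤ (2 * (N:ℝ) + 1) ^ (n - j) := pow_le_pow_left₀ (by positivity) hNm _
  have hkey : (N:ℝ) ^ (n - j) * ((2 * N + 1).choose (2 * j + 1) : ℝ) * (N:ℝ)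
      ≤ (2 * (N:ℝ) + 1) ^ (2 * n + 1) := by
    have hchain : (N:ℝ) ^ (n - j) * ((2 * N + 1).choose (2 * j + 1) : ℝ) * (N:ℝ)
        ≤ (2 * (N:ℝ) + 1) ^ (n - j) * (2 * (N:ℝ) + 1) ^ (2 * j + 1) * (2 * (N:ℝ) + 1) ^ (n - j) := by
      have hc0 : (0:ℝ) ≤ ((2 * N + 1).choose (2 * j + 1) : ℝ) := by positivity
      have h3 : (N:ℝ) ≤ (2 * (N:ℝ) + 1) ^ (n - j) := h1.trans h2
      apply mul_le_mul (mul_le_mul h2 hc hc0 (by positivity)) h3 (by positivity) (by positivity)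
    refine hchain.trans (le_of_eq ?_)
    rw [← pow_add, ← pow_add]
    congr 1
    omega
  have hterm : (N : ℝ) ^ (n - j) *
      ((π / (2 * N + 1)) ^ (2 * n) * (((2 * N + 1).choose (2 * j + 1) : ℝ) / ((2 * N + 1 : ℕ) : ℝ)))
      = π ^ (2 * n) * ((N:ℝ) ^ (n - j) * ((2 * N + 1).choose (2 * j + 1) : ℝ)) / (2 * (N:ℝ) + 1) ^ (2 * n + 1) := by
    rw [div_pow]
    push_cast
    rw [pow_succ]
    field_simp
  rw [hterm, div_le_div_iff₀ (by positivity) hNpos]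
  have hπ : (0:ℝ) ≤ π ^ (2 * n) := by positivity
  nlinarith [mul_le_mul_of_nonneg_left hkey hπ]

lemma tendsto_UB (n : ℕ) :
    Tendsto (fun N : ℕ => UB n N) atTop (𝓝 (π ^ (2 * n) / ((2 * n + 1).factorial : ℝ))) := by
  have hsplit : ∀ N : ℕ, UB n N = (∑ j ∈ range n, (N : ℝ) ^ (n - j) *
      ((π / (2 * N + 1)) ^ (2 * n) * (((2 * N + 1).choose (2 * j + 1) : ℝ) / ((2 * N + 1 : ℕ) : ℝ))))
      + LB n N := by
    intro N
    rw [UB, Finset.sum_range_succ]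
    congr 1
    rw [LB]
    simp
  rw [show (π ^ (2 * n) / ((2 * n + 1).factorial : ℝ)) = 0 + π ^ (2 * n) / ((2 * n + 1).factorial : ℝ) by ring]
  refine Tendsto.congr (fun N => (hsplit N).symm) (Tendsto.add ?_ (tendsto_LB n))
  rw [show (0:ℝ) = ∑ _j ∈ range n, (0:ℝ) by simp]
  apply tendsto_finset_sum
  intro j hj
  rw [mem_range] at hj
  apply tendsto_of_tendsto_of_tendsto_of_le_of_le' (g := fun _ => (0:ℝ))
    (h := fun N : ℕ => π ^ (2 * n) / (N : ℝ)) tendsto_const_nhds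
  · have := tendsto_const_div_atTop_nhds_zero_nat (π ^ (2 * n))
    exact this
  · filter_upwards with N
    positivity
  · filter_upwards [eventually_ge_atTop 1] with N hN
    exact UB_term_bound hj hN

lemma E_le_L {n : ℕ} (N : ℕ) : E n N ≤ π ^ (2 * n) / ((2 * n + 1).factorial : ℝ) := by
  apply ge_of_tendsto (tendsto_UB n)
  filter_upwards [eventually_ge_atTop (max n N)] with M hM
  exact (E_mono (le_of_max_le_right hM)).trans (E_le_UB (le_of_max_le_left hM))

abbrev T (n : ℕ) := {f : Fin n → ℕ // (∀ i j : Fin n, i < j → f j < f i) ∧ ∀ i, 1 ≤ f i}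

lemma fr_strictMono {n : ℕ} (k : T n) : StrictMono (fun i : Fin n => k.1 i.rev) :=
  fun i j hij => k.2.1 j.rev i.rev (by rwa [Fin.rev_lt_rev])

lemma k1_inj {n : ℕ} (k : T n) : Function.Injective k.1 := by
  intro a b hab
  rcases lt_trichotomy a b with h | h | h
  · have := k.2.1 a b h; omega
  · exact h
  · have := k.2.1 b a h; omega

lemma img_card {n : ℕ} (k : T n) : (image k.1 univ).card = n := by
  rw [Finset.card_image_of_injective _ (k1_inj k), card_univ, Fintype.card_fin]

lemma fr_eq {n : ℕ} (k : T n) :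
    (fun i : Fin n => k.1 i.rev) = (image k.1 univ).orderEmbOfFin (img_card k) :=
  Finset.orderEmbOfFin_unique (img_card k)
    (fun i => mem_image_of_mem _ (mem_univ _)) (fr_strictMono k)

lemma g_injective {n : ℕ} : Function.Injective (fun k : T n => image k.1 univ) := by
  intro k k' h
  simp only at h
  have h3 : (fun i : Fin n => k'.1 i.rev) = (image k.1 univ).orderEmbOfFin (img_card k) := by
    apply Finset.orderEmbOfFin_unique (img_card k)
      (fun i => by rw [h]; exact mem_image_of_mem _ (mem_univ _)) (fr_strictMono k')
  have h4 : (fun i : Fin n => k.1 i.rev) = (fun i : Fin n => k'.1 i.rev) :=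
    (fr_eq k).trans h3.symm
  apply Subtype.ext
  funext i
  have := congrFun h4 i.rev
  simpa [Fin.rev_rev] using this

lemma prod_eq {n : ℕ} (k : T n) :
    ∏ i, ((k.1 i : ℝ) ^ 2)⁻¹ = ∏ x ∈ image k.1 univ, ((x : ℝ) ^ 2)⁻¹ := by
  rw [Finset.prod_image (fun a _ b _ hab => k1_inj k hab)]

lemma partial_le {n : ℕ} (F : Finset (T n)) :
    ∃ N, ∑ k ∈ F, ∏ i, ((k.1 i : ℝ) ^ 2)⁻¹ ≤ E n N := by
  classical
  obtain ⟨N, hNdef⟩ : ∃ N : ℕ, N = F.sup (fun k => Finset.univ.sup k.1) := ⟨_, rfl⟩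
  refine ⟨N, ?_⟩
  have himg : ∀ k ∈ F, image k.1 univ ∈ powersetCard n (Icc 1 N) := by
    intro k hk
    apply mem_powersetCard.mpr ⟨?_, img_card k⟩
    intro x hx
    obtain ⟨i, _, rfl⟩ := mem_image.mp hx
    refine mem_Icc.mpr ⟨k.2.2 i, ?_⟩
    calc k.1 i ≤ Finset.univ.sup k.1 := Finset.le_sup (mem_univ i)
    _ ≤ N := by rw [hNdef]; exact Finset.le_sup (f := fun k : T n => Finset.univ.sup k.1) hk
  have step1 : ∑ k ∈ F, ∏ i, ((k.1 i : ℝ) ^ 2)⁻¹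
      = ∑ k ∈ F, ∏ x ∈ image k.1 univ, ((x : ℝ) ^ 2)⁻¹ :=
    Finset.sum_congr rfl fun k _ => prod_eq k
  have step2 : ∑ s ∈ F.image (fun k : T n => image k.1 univ), ∏ x ∈ s, ((x : ℝ) ^ 2)⁻¹
      = ∑ k ∈ F, ∏ x ∈ image k.1 univ, ((x : ℝ) ^ 2)⁻¹ :=
    Finset.sum_image fun a _ b _ h => g_injective h
  rw [step1, ← step2, E]
  apply Finset.sum_le_sum_of_subset_of_nonneg
  · intro s hs
    obtain ⟨k, hk, rfl⟩ := mem_image.mp hs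
    exact himg k hk
  · intro s _ _
    exact Finset.prod_nonneg fun x _ => by positivity

lemma E_partial (n N : ℕ) :
    ∃ D : Finset (T n), ∑ k ∈ D, ∏ i, ((k.1 i : ℝ) ^ 2)⁻¹ = E n N := by
  classical
  have hcard : ∀ s ∈ powersetCard n (Icc 1 N), s.card = n := fun s hs =>
    (mem_powersetCard.mp hs).2
  set φ : {s // s ∈ powersetCard n (Icc 1 N)} → T n := fun s =>
    ⟨fun i => (s.1.orderEmbOfFin (hcard s.1 s.2)) i.rev,
     fun i j hij => (s.1.orderEmbOfFin (hcard s.1 s.2)).strictMono (Fin.rev_lt_rev.mpr hij),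
     fun i => (mem_Icc.mp ((mem_powersetCard.mp s.2).1
       (Finset.orderEmbOfFin_mem s.1 (hcard s.1 s.2) i.rev))).1⟩ with hφ
  have himg : ∀ s : {s // s ∈ powersetCard n (Icc 1 N)}, image (φ s).1 univ = s.1 := by
    intro s
    apply Finset.coe_injective
    rw [coe_image, coe_univ, Set.image_univ]
    have hc2 : ((φ s).1 : Fin n → ℕ) = ⇑(s.1.orderEmbOfFin (hcard s.1 s.2)) ∘ Fin.rev := rfl
    rw [hc2, Function.Surjective.range_comp Fin.rev_surjective, Finset.range_orderEmbOfFin]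
  have hφinj : ∀ a ∈ (powersetCard n (Icc 1 N)).attach, ∀ b ∈ (powersetCard n (Icc 1 N)).attach,
      φ a = φ b → a = b := by
    intro a _ b _ hab
    apply Subtype.ext
    rw [← himg a, ← himg b, hab]
  refine ⟨(powersetCard n (Icc 1 N)).attach.image φ, ?_⟩
  rw [Finset.sum_image hφinj]
  have hterm : ∀ s : {s // s ∈ powersetCard n (Icc 1 N)},
      ∏ i, (((φ s).1 i : ℝ) ^ 2)⁻¹ = ∏ x ∈ s.1, ((x : ℝ) ^ 2)⁻¹ := by
    intro s
    rw [prod_eq (φ s), himg s]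
  rw [Finset.sum_congr rfl fun s _ => hterm s]
  rw [E]
  exact Finset.sum_attach (powersetCard n (Icc 1 N)) (fun t => ∏ x ∈ t, ((x : ℝ) ^ 2)⁻¹)


end ZTP

open ZTP

theorem zeta_two_pow_n (n : ℕ) (hn : 1 ≤ n) :
    ∑' k : {f : Fin n → ℕ // (∀ i j : Fin n, i < j → f j < f i) ∧ ∀ i, 1 ≤ f i},
      ∏ i, ((k.1 i : ℝ) ^ 2)⁻¹ =
    Real.pi ^ (2 * n) / (Nat.factorial (2 * n + 1)) := by
  have key : HasSum (fun k : ZTP.T n => ∏ i, ((k.1 i : ℝ) ^ 2)⁻¹)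
      (π ^ (2 * n) / ((2 * n + 1).factorial : ℝ)) := by
    apply hasSum_of_isLUB_of_nonneg
    · intro k
      exact Finset.prod_nonneg fun i _ => by positivity
    constructor
    · rintro x ⟨F, rfl⟩
      obtain ⟨N, hNle⟩ := partial_le F
      exact hNle.trans (E_le_L N)
    · intro b hb
      apply le_of_tendsto (tendsto_LB n)
      filter_upwards [eventually_ge_atTop n] with N hNge
      obtain ⟨D, hD⟩ := E_partial n N
      calc LB n N ≤ E n N := LB_le_E hNge
      _ = ∑ k ∈ D, ∏ i, ((k.1 i : ℝ) ^ 2)⁻¹ := hD.symm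
      _ ≤ b := hb ⟨D, rfl⟩
  exact key.tsum_eq
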